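/- arXiv:cs/0603059 — 2 statements merged into one kernel-verified Lean document; each statement's English description precedes it below -/
import Mathlib

section
/- Cantor-set case of Theorem 3.3: if f_0(I) ∪ f_1(I) ⊊ I (equivalently f_1(p_0) < f_0(p_1), the non-overlapping case), then supp(Q) is a Cantor set: it is a nonempty compact subset of I that is totally disconnected and perfect (has no isolated points). -/
set_option linter.unusedSectionVars false
set_option linter.deprecated false
set_option maxHeartbeats 1000000

open MeasureTheory

/-- `f_0(x) = ((1−ε)/ε)·(π_00 x + π_10)/(π_01 x + π_11)`. -/
noncomputable def f₀ (π00 π01 π10 π11 ε : ℝ) (x : ℝ) : ℝ :=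
  ((1 - ε) / ε) * ((π00 * x + π10) / (π01 * x + π11))

/-- `f_1(x) = (ε/(1−ε))·(π_00 x + π_10)/(π_01 x + π_11)`. -/
noncomputable def f₁ (π00 π01 π10 π11 ε : ℝ) (x : ℝ) : ℝ :=
  (ε / (1 - ε)) * ((π00 * x + π10) / (π01 * x + π11))

/-- `r_0(x) = (((1−ε)π_00 + επ_01)x + ((1−ε)π_10 + επ_11))/(x+1)`. -/
noncomputable def r₀ (π00 π01 π10 π11 ε : ℝ) (x : ℝ) : ℝ :=
  (((1 - ε) * π00 + ε * π01) * x + ((1 - ε) * π10 + ε * π11)) / (x + 1)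

/-- `r_1(x) = ((επ_00 + (1−ε)π_01)x + (επ_10 + (1−ε)π_11))/(x+1)`. -/
noncomputable def r₁ (π00 π01 π10 π11 ε : ℝ) (x : ℝ) : ℝ :=
  ((ε * π00 + (1 - ε) * π01) * x + (ε * π10 + (1 - ε) * π11)) / (x + 1)

/-- `f_b` for a binary symbol `b`. -/
noncomputable def fb (π00 π01 π10 π11 ε : ℝ) (b : Bool) : ℝ → ℝ :=
  if b then f₁ π00 π01 π10 π11 ε else f₀ π00 π01 π10 π11 ε

/-- The support of a measure on `ℝ`: the set of points all of whose open neighborhoods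
have positive measure (the smallest closed set of full measure). -/
def measSupp (Q : Measure ℝ) : Set ℝ :=
  {x : ℝ | ∀ U : Set ℝ, IsOpen U → x ∈ U → 0 < Q U}

/-- Blackwell's invariance equation
`Q(E) = ∫_{f_0^{−1}(E)} r_0 dQ + ∫_{f_1^{−1}(E)} r_1 dQ` for Borel `E ⊆ (0,∞)`. -/
def BlackwellInvariant (π00 π01 π10 π11 ε : ℝ) (Q : Measure ℝ) : Prop :=
  ∀ E : Set ℝ, MeasurableSet E → E ⊆ Set.Ioi (0 : ℝ) →
    Q E = (∫⁻ x in f₀ π00 π01 π10 π11 ε ⁻¹' E, ENNReal.ofReal (r₀ π00 π01 π10 π11 ε x) ∂Q)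
      + ∫⁻ x in f₁ π00 π01 π10 π11 ε ⁻¹' E, ENNReal.ofReal (r₁ π00 π01 π10 π11 ε x) ∂Q

section Helpers
open Set Real

noncomputable def mob (π00 π01 π10 π11 c : ℝ) (x : ℝ) : ℝ :=
  c * ((π00 * x + π10) / (π01 * x + π11))

section Alg
variable {π00 π01 π10 π11 c p : ℝ}

lemma f₀_eq_mob (ε : ℝ) : f₀ π00 π01 π10 π11 ε = mob π00 π01 π10 π11 ((1-ε)/ε) := rfl
lemma f₁_eq_mob (ε : ℝ) : f₁ π00 π01 π10 π11 ε = mob π00 π01 π10 π11 (ε/(1-ε)) := rfl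

variable (h00 : 0 < π00) (h01 : 0 < π01) (h10 : 0 < π10) (h11 : 0 < π11)
  (hdet : 0 < π00 * π11 - π01 * π10) (hc : 0 < c)

include h01 h11 in
lemma denom_pos {x : ℝ} (hx : 0 ≤ x) : 0 < π01 * x + π11 := by positivity

include h00 h10 in
lemma num_pos {x : ℝ} (hx : 0 ≤ x) : 0 < π00 * x + π10 := by positivity

include h00 h01 h10 h11 hc in
lemma mob_pos {x : ℝ} (hx : 0 ≤ x) : 0 < mob π00 π01 π10 π11 c x := by
  have := denom_pos h01 h11 hx; have := num_pos h00 h10 hx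
  unfold mob; positivity

include h00 h01 h10 h11 hdet hc in
lemma mob_strictMono {x y : ℝ} (hx : 0 ≤ x) (hxy : x < y) :
    mob π00 π01 π10 π11 c x < mob π00 π01 π10 π11 c y := by
  have hdx := denom_pos h01 h11 hx
  have hdy := denom_pos h01 h11 (le_trans hx hxy.le)
  unfold mob
  apply mul_lt_mul_of_pos_left _ hc
  rw [div_lt_div_iff₀ hdx hdy]
  nlinarith

include h00 h01 h10 h11 hdet hc in
lemma mob_mono {x y : ℝ} (hx : 0 ≤ x) (hxy : x ≤ y) :
    mob π00 π01 π10 π11 c x ≤ mob π00 π01 π10 π11 c y := by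
  rcases eq_or_lt_of_le hxy with rfl | h
  · exact le_refl _
  · exact (mob_strictMono h00 h01 h10 h11 hdet hc hx h).le

include h00 h01 h10 h11 hc in
lemma mob_fixed_sign (hp : 0 < p) (hfix : mob π00 π01 π10 π11 c p = p) :
    (∀ x, 0 ≤ x → x < p → x < mob π00 π01 π10 π11 c x) ∧
    (∀ x, p < x → mob π00 π01 π10 π11 c x < x) := by
  have hdp := denom_pos h01 h11 hp.le
  have hfix' : c * (π00 * p + π10) = p * (π01 * p + π11) := by
    unfold mob at hfix; rw [mul_div_assoc', div_eq_iff (ne_of_gt hdp)] at hfix; linarith [hfix]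
  have hT : 0 < π01 * p + π11 - c * π00 := by
    nlinarith [mul_pos hc h10, hfix']
  constructor
  · intro x hx hxp
    have hdx := denom_pos h01 h11 hx
    unfold mob
    rw [mul_div_assoc', lt_div_iff₀ hdx]
    have h5 : 0 < π01 * x + (π01 * p + π11 - c * π00) := by nlinarith
    nlinarith [mul_pos (sub_pos.mpr hxp) h5]
  · intro x hpx
    have hx : 0 ≤ x := le_trans hp.le hpx.le
    have hdx := denom_pos h01 h11 hx
    unfold mob
    rw [mul_div_assoc', div_lt_iff₀ hdx]
    have h5 : 0 < π01 * x + (π01 * p + π11 - c * π00) := by nlinarith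
    nlinarith [mul_pos (sub_pos.mpr hpx) h5]

include h00 h01 h10 h11 hdet hc in
lemma mob_lt_sup {x : ℝ} (hx : 0 ≤ x) :
    mob π00 π01 π10 π11 c x < c * (π00 / π01) := by
  have hdx := denom_pos h01 h11 hx
  unfold mob
  apply mul_lt_mul_of_pos_left _ hc
  rw [div_lt_div_iff₀ hdx h01]
  nlinarith

include h00 h01 h10 h11 hdet hc in
lemma mob_gt_inf {x : ℝ} (hx : 0 < x) :
    c * (π10 / π11) < mob π00 π01 π10 π11 c x := by
  have h0 : mob π00 π01 π10 π11 c 0 = c * (π10 / π11) := by unfold mob; norm_num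
  rw [← h0]
  exact mob_strictMono h00 h01 h10 h11 hdet hc le_rfl hx

include h01 h11 in
lemma mob_continuousAt {x : ℝ} (hx : 0 ≤ x) :
    ContinuousAt (mob π00 π01 π10 π11 c) x := by
  have hdx := denom_pos h01 h11 hx
  unfold mob
  exact continuousAt_const.mul (((continuousAt_const.mul continuousAt_id).add
    continuousAt_const).div ((continuousAt_const.mul continuousAt_id).add
    continuousAt_const) (ne_of_gt hdx))

end Alg

noncomputable def tau (π00 π01 π10 π11 : ℝ) : ℝ :=
  (π00 * π11 - π01 * π10) / (Real.sqrt (π00 * π11) + Real.sqrt (π01 * π10))^2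

section Contraction
variable {π00 π01 π10 π11 c : ℝ}
  (h00 : 0 < π00) (h01 : 0 < π01) (h10 : 0 < π10) (h11 : 0 < π11)
  (hdet : 0 < π00 * π11 - π01 * π10) (hc : 0 < c)

include h00 h01 h10 h11 hdet in
lemma tau_pos : 0 < tau π00 π01 π10 π11 := by
  unfold tau
  have h1 : 0 < Real.sqrt (π00 * π11) := Real.sqrt_pos.mpr (by positivity)
  have h2 : 0 ≤ Real.sqrt (π01 * π10) := Real.sqrt_nonneg _
  positivity

include h00 h01 h10 h11 hdet in
lemma tau_lt_one : tau π00 π01 π10 π11 < 1 := by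
  unfold tau
  have h1 : Real.sqrt (π00 * π11) ^ 2 = π00 * π11 := Real.sq_sqrt (by positivity)
  have h2 : Real.sqrt (π01 * π10) ^ 2 = π01 * π10 := Real.sq_sqrt (by positivity)
  have h3 : 0 < Real.sqrt (π00 * π11) := Real.sqrt_pos.mpr (by positivity)
  have h4 : 0 < Real.sqrt (π01 * π10) := Real.sqrt_pos.mpr (by positivity)
  rw [div_lt_one (by positivity)]
  nlinarith [mul_pos h3 h4]

include h00 h01 h10 h11 hdet in
lemma deriv_bound {t : ℝ} (ht : 0 < t) :
    (π00 * π11 - π01 * π10) * t / ((π00 * t + π10) * (π01 * t + π11))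
      ≤ tau π00 π01 π10 π11 := by
  have h1 : Real.sqrt (π00 * π11) ^ 2 = π00 * π11 := Real.sq_sqrt (by positivity)
  have h2 : Real.sqrt (π01 * π10) ^ 2 = π01 * π10 := Real.sq_sqrt (by positivity)
  have hA : Real.sqrt (π00 * π01) ^ 2 = π00 * π01 := Real.sq_sqrt (by positivity)
  have hB : Real.sqrt (π10 * π11) ^ 2 = π10 * π11 := Real.sq_sqrt (by positivity)
  have h3 : 0 < Real.sqrt (π00 * π11) := Real.sqrt_pos.mpr (by positivity)
  have h4 : 0 ≤ Real.sqrt (π01 * π10) := Real.sqrt_nonneg _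
  have hs12 : Real.sqrt (π00 * π11) * Real.sqrt (π01 * π10)
      = Real.sqrt (π00 * π01) * Real.sqrt (π10 * π11) := by
    rw [← Real.sqrt_mul (by positivity), ← Real.sqrt_mul (by positivity)]
    ring_nf
  have hs12t : Real.sqrt (π00 * π11) * Real.sqrt (π01 * π10) * t
      = Real.sqrt (π00 * π01) * Real.sqrt (π10 * π11) * t := by rw [hs12]
  have key : (π00 * t + π10) * (π01 * t + π11)
        - (Real.sqrt (π00 * π11) + Real.sqrt (π01 * π10))^2 * t
      = (Real.sqrt (π00 * π01) * t - Real.sqrt (π10 * π11))^2 := by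
    linear_combination (-t) * h1 + (-t) * h2 + (-2*t) * hs12 + (-(t^2)) * hA + (-1 : ℝ) * hB
  have hP : (Real.sqrt (π00 * π11) + Real.sqrt (π01 * π10))^2 * t
      ≤ (π00 * t + π10) * (π01 * t + π11) := by
    nlinarith [sq_nonneg (Real.sqrt (π00 * π01) * t - Real.sqrt (π10 * π11)), key]
  unfold tau
  rw [div_le_div_iff₀ (by positivity) (by positivity)]
  nlinarith [mul_pos ht hdet]

include h00 h01 h10 h11 hdet hc in
lemma mob_log_contract {x y : ℝ} (hx : 0 < x) (hy : 0 < y) :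
    |Real.log (mob π00 π01 π10 π11 c x) - Real.log (mob π00 π01 π10 π11 c y)|
      ≤ tau π00 π01 π10 π11 * |Real.log x - Real.log y| := by
  -- the conjugated map G(u) = log g(e^u)
  set G : ℝ → ℝ := fun u => Real.log (π00 * Real.exp u + π10) - Real.log (π01 * Real.exp u + π11)
    with hG
  set G' : ℝ → ℝ := fun u =>
    (π00 * π11 - π01 * π10) * Real.exp u / ((π00 * Real.exp u + π10) * (π01 * Real.exp u + π11))
    with hG'
  have hderiv : ∀ u, HasDerivAt G (G' u) u := by
    intro u
    have he : 0 < Real.exp u := Real.exp_pos u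
    have hnum : HasDerivAt (fun u => π00 * Real.exp u + π10) (π00 * Real.exp u) u :=
      ((Real.hasDerivAt_exp u).const_mul π00).add_const π10
    have hden : HasDerivAt (fun u => π01 * Real.exp u + π11) (π01 * Real.exp u) u :=
      ((Real.hasDerivAt_exp u).const_mul π01).add_const π11
    have h1 := (hnum.log (by positivity)).sub (hden.log (by positivity))
    refine h1.congr_deriv ?_
    rw [hG']
    field_simp
    ring
  have hbound : ∀ u, ‖G' u‖ ≤ tau π00 π01 π10 π11 := by
    intro u
    have he : 0 < Real.exp u := Real.exp_pos u
    rw [Real.norm_eq_abs, hG', abs_of_nonneg (by positivity)]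
    exact deriv_bound h00 h01 h10 h11 hdet he
  have hlip : ∀ u v : ℝ, ‖G v - G u‖ ≤ tau π00 π01 π10 π11 * ‖v - u‖ := by
    intro u v
    exact Convex.norm_image_sub_le_of_norm_hasDerivWithin_le
      (fun w _ => (hderiv w).hasDerivWithinAt) (fun w _ => hbound w)
      convex_univ (mem_univ u) (mem_univ v)
  have hlog : ∀ z : ℝ, 0 < z →
      Real.log (mob π00 π01 π10 π11 c z) = Real.log c + G (Real.log z) := by
    intro z hz
    have hdz : 0 < π01 * z + π11 := by positivity
    have hnz : 0 < π00 * z + π10 := by positivity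
    rw [hG]
    simp only [Real.exp_log hz]
    unfold mob
    rw [Real.log_mul (ne_of_gt hc) (by positivity), Real.log_div (ne_of_gt hnz) (ne_of_gt hdz)]
  rw [hlog x hx, hlog y hy]
  have := hlip (Real.log y) (Real.log x)
  simp only [Real.norm_eq_abs] at this
  calc |Real.log c + G (Real.log x) - (Real.log c + G (Real.log y))|
      = |G (Real.log x) - G (Real.log y)| := by ring_nf
    _ ≤ tau π00 π01 π10 π11 * |Real.log x - Real.log y| := this

end Contraction

section Abstract

variable {S : Set ℝ} {F₀ F₁ : ℝ → ℝ} {p₁ p₀ γ δ τ : ℝ}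

/-- |u - v| ≤ p₀ |log u - log v| on [p₁, p₀] with p₁ > 0 -/
lemma euclid_le_log {u v : ℝ} (hp₁ : 0 < p₁) (hu : u ∈ Icc p₁ p₀) (hv : v ∈ Icc p₁ p₀) :
    |u - v| ≤ p₀ * |Real.log u - Real.log v| := by
  wlog h : v ≤ u generalizing u v
  · have := this hv hu (le_of_not_ge h)
    rw [abs_sub_comm, abs_sub_comm (Real.log v)] at this; exact this
  have hv0 : 0 < v := lt_of_lt_of_le hp₁ hv.1
  have hu0 : 0 < u := lt_of_lt_of_le hp₁ hu.1
  have hlog : Real.log v ≤ Real.log u := Real.log_le_log hv0 h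
  rw [abs_of_nonneg (by linarith), abs_of_nonneg (by linarith)]
  have h1 : Real.log (v / u) ≤ v / u - 1 := Real.log_le_sub_one_of_pos (by positivity)
  rw [Real.log_div (ne_of_gt hv0) (ne_of_gt hu0)] at h1
  -- log u - log v ≥ 1 - v/u = (u - v)/u
  have h2 : (u - v) / u ≤ Real.log u - Real.log v := by
    have : 1 - v / u ≤ Real.log u - Real.log v := by linarith
    calc (u - v) / u = 1 - v / u := by field_simp
      _ ≤ _ := this
  have hup : u ≤ p₀ := hu.2
  calc u - v = u * ((u - v) / u) := by field_simp
    _ ≤ p₀ * ((u - v) / u) := by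
        apply mul_le_mul_of_nonneg_right hup (div_nonneg (by linarith) hu0.le)
    _ ≤ p₀ * (Real.log u - Real.log v) := by
        apply mul_le_mul_of_nonneg_left h2 (by linarith [hu.1, hu.2])
  
lemma cantor_abstract
    (hp₁ : 0 < p₁) (hlt : p₁ < p₀)
    (hSclosed : IsClosed S) (hSsub : S ⊆ Icc p₁ p₀) (hNE : S.Nonempty)
    (hself : S = F₀ '' S ∪ F₁ '' S)
    (hτ0 : 0 ≤ τ) (hτ1 : τ < 1)
    (hmaps₀ : MapsTo F₀ (Icc p₁ p₀) (Icc p₁ p₀))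
    (hmaps₁ : MapsTo F₁ (Icc p₁ p₀) (Icc p₁ p₀))
    (hmono₀ : StrictMonoOn F₀ (Icc p₁ p₀))
    (hmono₁ : StrictMonoOn F₁ (Icc p₁ p₀))
    (hlip₀ : ∀ x ∈ Icc p₁ p₀, ∀ y ∈ Icc p₁ p₀,
      |Real.log (F₀ x) - Real.log (F₀ y)| ≤ τ * |Real.log x - Real.log y|)
    (hlip₁ : ∀ x ∈ Icc p₁ p₀, ∀ y ∈ Icc p₁ p₀,
      |Real.log (F₁ x) - Real.log (F₁ y)| ≤ τ * |Real.log x - Real.log y|)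
    (hγδ : γ < δ)
    (hgap₁ : ∀ x ∈ Icc p₁ p₀, F₁ x ≤ γ)
    (hgap₀ : ∀ x ∈ Icc p₁ p₀, δ ≤ F₀ x) :
    IsTotallyDisconnected S ∧ Perfect S := by
  set I := Icc p₁ p₀ with hI
  set D := Real.log p₀ - Real.log p₁ with hD
  have hp₀ : 0 < p₀ := hp₁.trans hlt
  have hD0 : 0 < D := by
    have := Real.log_lt_log hp₁ hlt; simp [hD]; linarith
  have hposI : ∀ x ∈ I, 0 < x := fun x hx => lt_of_lt_of_le hp₁ hx.1
  -- dichotomy on S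
  have hdich : ∀ s ∈ S, s ≤ γ ∨ δ ≤ s := by
    intro s hs
    rw [hself] at hs
    rcases hs with ⟨w, hw, rfl⟩ | ⟨w, hw, rfl⟩
    · right; exact hgap₀ w (hSsub hw)
    · left; exact hgap₁ w (hSsub hw)
  have hFS₀ : ∀ s ∈ S, F₀ s ∈ S := by
    intro s hs; rw [hself]; exact Or.inl ⟨s, hs, rfl⟩
  have hFS₁ : ∀ s ∈ S, F₁ s ∈ S := by
    intro s hs; rw [hself]; exact Or.inr ⟨s, hs, rfl⟩
  -- logs of elements of I lie in an interval of length D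
  have hlogD : ∀ x ∈ I, ∀ y ∈ I, |Real.log x - Real.log y| ≤ D := by
    intro x hx y hy
    have h2 := Real.log_le_log (hposI y hy) hy.2
    have h4 := Real.log_le_log (hposI x hx) hx.2
    have h5 : Real.log p₁ ≤ Real.log x := Real.log_le_log hp₁ hx.1
    have h6 : Real.log p₁ ≤ Real.log y := Real.log_le_log hp₁ hy.1
    rw [abs_sub_le_iff]
    constructor <;> simp only [hD] <;> linarith
  -- Main contraction estimate on intervals inside S
  have key : ∀ n : ℕ, ∀ a b : ℝ, a ≤ b → Icc a b ⊆ S →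
      Real.log b - Real.log a ≤ τ ^ n * D := by
    intro n
    induction n with
    | zero =>
      intro a b hab hsub
      have ha : a ∈ I := hSsub (hsub ⟨le_refl a, hab⟩)
      have hb : b ∈ I := hSsub (hsub ⟨hab, le_refl b⟩)
      have h1 := Real.log_le_log (hposI b hb) hb.2
      have h2 := Real.log_le_log hp₁ ha.1
      simp only [pow_zero, one_mul, hD]; linarith
    | succ n ih =>
      intro a b hab hsub
      have haS : a ∈ S := hsub ⟨le_refl a, hab⟩
      have hbS : b ∈ S := hsub ⟨hab, le_refl b⟩
      have haI : a ∈ I := hSsub haS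
      have hbI : b ∈ I := hSsub hbS
      -- dichotomy cases
      have hcases : b ≤ γ ∨ δ ≤ a := by
        rcases hdich b hbS with hb | hb
        · exact Or.inl hb
        · rcases hdich a haS with ha | ha
          · exfalso
            have ht : (γ + δ) / 2 ∈ Icc a b := ⟨by linarith, by linarith⟩
            rcases hdich _ (hsub ht) with h | h <;> linarith
          · exact Or.inr ha
      -- helper to handle either branch uniformly
      rcases hcases with hcase | hcase
      · -- everything is in F₁ '' S
        have hin : ∀ t ∈ Icc a b, ∃ s ∈ S, F₁ s = t := by
          intro t ht
          have htS := hsub ht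
          have h := htS; rw [hself] at h
          rcases h with ⟨w, hw, rfl⟩ | ⟨w, hw, rfl⟩
          · exfalso; have := hgap₀ w (hSsub hw); have : δ ≤ F₀ w := this
            have hb' : F₀ w ≤ b := ht.2
            linarith
          · exact ⟨w, hw, rfl⟩
        obtain ⟨a', ha'S, ha'⟩ := hin a ⟨le_refl a, hab⟩
        obtain ⟨b', hb'S, hb'⟩ := hin b ⟨hab, le_refl b⟩
        have ha'I := hSsub ha'S
        have hb'I := hSsub hb'S
        have hab' : a' ≤ b' := by
          by_contra h
          push_neg at h
          have := hmono₁ hb'I ha'I h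
          rw [ha', hb'] at this; linarith
        have hsub' : Icc a' b' ⊆ S := by
          intro s hs
          have hsI : s ∈ I := ⟨le_trans ha'I.1 hs.1, le_trans hs.2 hb'I.2⟩
          have h1 : F₁ s ∈ Icc a b := by
            constructor
            · rw [← ha']; rcases eq_or_lt_of_le hs.1 with rfl | h
              · exact le_refl _
              · exact (hmono₁ ha'I hsI h).le
            · rw [← hb']; rcases eq_or_lt_of_le hs.2 with rfl | h
              · exact le_refl _
              · exact (hmono₁ hsI hb'I h).le
          obtain ⟨w, hwS, hw⟩ := hin _ h1
          have : w = s := hmono₁.injOn (hSsub hwS) hsI hw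
          rwa [← this]
        have ihab := ih a' b' hab' hsub'
        have hlips := hlip₁ b' hb'I a' ha'I
        rw [ha', hb'] at hlips
        have hlogab : Real.log a ≤ Real.log b := Real.log_le_log (hposI a haI) hab
        have hlogab' : Real.log a' ≤ Real.log b' := Real.log_le_log (hposI a' ha'I) hab'
        rw [abs_of_nonneg (by linarith), abs_of_nonneg (by linarith)] at hlips
        calc Real.log b - Real.log a ≤ τ * (Real.log b' - Real.log a') := hlips
          _ ≤ τ * (τ ^ n * D) := mul_le_mul_of_nonneg_left ihab hτ0
          _ = τ ^ (n + 1) * D := by ring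
      · -- everything is in F₀ '' S
        have hin : ∀ t ∈ Icc a b, ∃ s ∈ S, F₀ s = t := by
          intro t ht
          have htS := hsub ht
          have h := htS; rw [hself] at h
          rcases h with ⟨w, hw, rfl⟩ | ⟨w, hw, rfl⟩
          · exact ⟨w, hw, rfl⟩
          · exfalso; have := hgap₁ w (hSsub hw)
            have ha' : a ≤ F₁ w := ht.1
            linarith
        obtain ⟨a', ha'S, ha'⟩ := hin a ⟨le_refl a, hab⟩
        obtain ⟨b', hb'S, hb'⟩ := hin b ⟨hab, le_refl b⟩
        have ha'I := hSsub ha'S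
        have hb'I := hSsub hb'S
        have hab' : a' ≤ b' := by
          by_contra h
          push_neg at h
          have := hmono₀ hb'I ha'I h
          rw [ha', hb'] at this; linarith
        have hsub' : Icc a' b' ⊆ S := by
          intro s hs
          have hsI : s ∈ I := ⟨le_trans ha'I.1 hs.1, le_trans hs.2 hb'I.2⟩
          have h1 : F₀ s ∈ Icc a b := by
            constructor
            · rw [← ha']; rcases eq_or_lt_of_le hs.1 with rfl | h
              · exact le_refl _
              · exact (hmono₀ ha'I hsI h).le
            · rw [← hb']; rcases eq_or_lt_of_le hs.2 with rfl | h
              · exact le_refl _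
              · exact (hmono₀ hsI hb'I h).le
          obtain ⟨w, hwS, hw⟩ := hin _ h1
          have : w = s := hmono₀.injOn (hSsub hwS) hsI hw
          rwa [← this]
        have ihab := ih a' b' hab' hsub'
        have hlips := hlip₀ b' hb'I a' ha'I
        rw [ha', hb'] at hlips
        have hlogab : Real.log a ≤ Real.log b := Real.log_le_log (hposI a haI) hab
        have hlogab' : Real.log a' ≤ Real.log b' := Real.log_le_log (hposI a' ha'I) hab'
        rw [abs_of_nonneg (by linarith), abs_of_nonneg (by linarith)] at hlips
        calc Real.log b - Real.log a ≤ τ * (Real.log b' - Real.log a') := hlips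
          _ ≤ τ * (τ ^ n * D) := mul_le_mul_of_nonneg_left ihab hτ0
          _ = τ ^ (n + 1) * D := by ring
  -- composition lemma for the perfect part
  have comp : ∀ m : ℕ, ∀ y ∈ S, ∃ G : ℝ → ℝ, MapsTo G I I ∧ (∀ s ∈ S, G s ∈ S) ∧ InjOn G I ∧
      (∀ u ∈ I, ∀ v ∈ I, |Real.log (G u) - Real.log (G v)| ≤ τ ^ m * |Real.log u - Real.log v|)
      ∧ ∃ w ∈ S, G w = y := by
    intro m
    induction m with
    | zero =>
      intro y hy
      exact ⟨id, mapsTo_id I, fun s hs => hs, injOn_id I, by simp, y, hy, rfl⟩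
    | succ m ih =>
      intro y hy
      have hy' := hy; rw [hself] at hy'
      have main : ∀ Fb : ℝ → ℝ, MapsTo Fb I I → StrictMonoOn Fb I →
          (∀ u ∈ I, ∀ v ∈ I, |Real.log (Fb u) - Real.log (Fb v)| ≤ τ * |Real.log u - Real.log v|) →
          (∀ s ∈ S, Fb s ∈ S) → ∀ z ∈ S, Fb z = y →
          ∃ G : ℝ → ℝ, MapsTo G I I ∧ (∀ s ∈ S, G s ∈ S) ∧ InjOn G I ∧
          (∀ u ∈ I, ∀ v ∈ I,
            |Real.log (G u) - Real.log (G v)| ≤ τ ^ (m+1) * |Real.log u - Real.log v|)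
          ∧ ∃ w ∈ S, G w = y := by
        intro Fb hFmaps hFmono hFlip hFS z hz hzy
        obtain ⟨G, hGmaps, hGS, hGinj, hGlip, w, hwS, hw⟩ := ih z hz
        refine ⟨Fb ∘ G, hFmaps.comp hGmaps, fun s hs => hFS _ (hGS s hs),
          hFmono.injOn.comp hGinj hGmaps, ?_, w, hwS, by simp [Function.comp, hw, hzy]⟩
        intro u hu v hv
        calc |Real.log ((Fb ∘ G) u) - Real.log ((Fb ∘ G) v)|
            ≤ τ * |Real.log (G u) - Real.log (G v)| := hFlip _ (hGmaps hu) _ (hGmaps hv)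
          _ ≤ τ * (τ ^ m * |Real.log u - Real.log v|) :=
              mul_le_mul_of_nonneg_left (hGlip u hu v hv) hτ0
          _ = τ ^ (m + 1) * |Real.log u - Real.log v| := by ring
      rcases hy' with ⟨z, hz, hzy⟩ | ⟨z, hz, hzy⟩
      · exact main F₀ hmaps₀ hmono₀ hlip₀ hFS₀ z hz hzy
      · exact main F₁ hmaps₁ hmono₁ hlip₁ hFS₁ z hz hzy
  constructor
  · -- totally disconnected
    intro t hts htconn
    intro x hx y hy
    by_contra hne
    wlog hxy : x < y generalizing x y
    · exact this hy hx (Ne.symm hne)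
        (lt_of_le_of_ne (le_of_not_gt hxy) (Ne.symm hne))
    have hsub : Icc x y ⊆ S := fun z hz => hts (htconn.Icc_subset hx hy hz)
    have hxI : x ∈ I := hSsub (hts hx)
    have hx0 : 0 < x := hposI x hxI
    have hdiff : 0 < Real.log y - Real.log x := by
      have := Real.log_lt_log hx0 hxy; linarith
    obtain ⟨n, hn⟩ := exists_pow_lt_of_lt_one (div_pos hdiff hD0) hτ1
    have hlt' : τ ^ n * D < Real.log y - Real.log x := by
      have := (lt_div_iff₀ hD0).mp hn; linarith
    exact absurd (key n x y hxy.le hsub) (not_le.mpr hlt')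
  · -- perfect
    refine ⟨hSclosed, ?_⟩
    rw [preperfect_iff_nhds]
    intro x hx U hU
    obtain ⟨r, hr0, hball⟩ := Metric.mem_nhds_iff.mp hU
    obtain ⟨s, hs⟩ := hNE
    have hq₁ : F₀ s ∈ S := hFS₀ s hs
    have hq₂ : F₁ s ∈ S := hFS₁ s hs
    have hqne : F₁ s ≠ F₀ s :=
      ne_of_lt (lt_of_le_of_lt (hgap₁ s (hSsub hs)) (lt_of_lt_of_le hγδ (hgap₀ s (hSsub hs))))
    obtain ⟨n, hn⟩ := exists_pow_lt_of_lt_one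
      (show (0:ℝ) < r / (p₀ * D) from div_pos hr0 (by positivity)) hτ1
    have hpow : τ ^ n * (p₀ * D) < r := by
      have := (lt_div_iff₀ (show (0:ℝ) < p₀ * D by positivity)).mp hn; linarith
    obtain ⟨G, hGmaps, hGS, hGinj, hGlip, w, hwS, hw⟩ := comp n x hx
    have hxI : x ∈ I := hSsub hx
    have hwI : w ∈ I := hSsub hwS
    have hclose : ∀ q, q ∈ S → |G q - x| < r := by
      intro q hq
      have hqI : q ∈ I := hSsub hq
      have hGq : G q ∈ S := hGS q hq
      have h1 : |Real.log (G q) - Real.log (G w)| ≤ τ ^ n * |Real.log q - Real.log w| :=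
        hGlip q hqI w hwI
      have h2 : |Real.log q - Real.log w| ≤ D := hlogD q hqI w hwI
      have h3 : |G q - x| ≤ p₀ * |Real.log (G q) - Real.log x| :=
        euclid_le_log hp₁ (hSsub hGq) hxI
      have hτn : (0:ℝ) ≤ τ ^ n := pow_nonneg hτ0 n
      calc |G q - x| ≤ p₀ * |Real.log (G q) - Real.log x| := h3
        _ = p₀ * |Real.log (G q) - Real.log (G w)| := by rw [hw]
        _ ≤ p₀ * (τ ^ n * |Real.log q - Real.log w|) :=
            mul_le_mul_of_nonneg_left h1 hp₀.le
        _ ≤ p₀ * (τ ^ n * D) := by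
            apply mul_le_mul_of_nonneg_left (mul_le_mul_of_nonneg_left h2 hτn) hp₀.le
        _ = τ ^ n * (p₀ * D) := by ring
        _ < r := hpow
    have hGne : G (F₁ s) ≠ G (F₀ s) := fun h => hqne (hGinj (hSsub hq₂) (hSsub hq₁) h)
    by_cases hcase : G (F₀ s) = x
    · refine ⟨G (F₁ s), ⟨hball ?_, hGS _ hq₂⟩, ?_⟩
      · rw [Metric.mem_ball, Real.dist_eq]; exact hclose _ hq₂
      · rw [← hcase]; exact hGne
    · refine ⟨G (F₀ s), ⟨hball ?_, hGS _ hq₁⟩, hcase⟩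
      rw [Metric.mem_ball, Real.dist_eq]; exact hclose _ hq₁

end Abstract

lemma measSupp_closed (Q : Measure ℝ) : IsClosed (measSupp Q) := by
  rw [← isOpen_compl_iff]
  rw [isOpen_iff_forall_mem_open]
  intro x hx
  simp only [measSupp, mem_compl_iff, mem_setOf_eq, not_forall] at hx
  obtain ⟨U, hUopen, hxU, hQU⟩ := hx
  refine ⟨U, fun y hy => ?_, hUopen, hxU⟩
  simp only [measSupp, mem_compl_iff, mem_setOf_eq, not_forall]
  exact ⟨U, hUopen, hy, hQU⟩

lemma measSupp_compl_null (Q : Measure ℝ) : Q (measSupp Q)ᶜ = 0 := by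
  obtain ⟨b, hbc, -, hbasis⟩ := TopologicalSpace.exists_countable_basis ℝ
  have hsub : (measSupp Q)ᶜ ⊆ ⋃₀ {U ∈ b | Q U = 0} := by
    intro x hx
    simp only [measSupp, mem_compl_iff, mem_setOf_eq, not_forall] at hx
    obtain ⟨U, hUopen, hxU, hQU⟩ := hx
    have hQU0 : Q U = 0 := by
      by_contra h
      exact hQU (lt_of_le_of_ne zero_le (Ne.symm h))
    obtain ⟨B, hBb, hxB, hBU⟩ := hbasis.exists_subset_of_mem_open hxU hUopen
    exact ⟨B, ⟨hBb, measure_mono_null hBU hQU0⟩, hxB⟩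
  apply measure_mono_null hsub
  rw [measure_sUnion_null_iff (hbc.mono (sep_subset _ _))]
  exact fun U hU => hU.2

lemma measSupp_subset_of_null {Q : Measure ℝ} {C : Set ℝ} (hC : IsClosed C)
    (hnull : Q Cᶜ = 0) : measSupp Q ⊆ C := by
  intro x hx
  by_contra h
  have := hx Cᶜ hC.isOpen_compl h
  rw [hnull] at this
  exact lt_irrefl 0 this

lemma measSupp_nonempty {Q : Measure ℝ} [IsProbabilityMeasure Q] :
    (measSupp Q).Nonempty := by
  by_contra h
  rw [not_nonempty_iff_eq_empty] at h
  have := measSupp_compl_null Q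
  rw [h, compl_empty] at this
  simp [measure_univ] at this

-- iteration sequences
noncomputable def upseq (π00 π01 π10 π11 ε : ℝ) : ℕ → ℝ
  | 0 => ((1 - ε) / ε) * (π00 / π01)
  | n + 1 => f₀ π00 π01 π10 π11 ε (upseq π00 π01 π10 π11 ε n)

noncomputable def loseq (π00 π01 π10 π11 ε : ℝ) : ℕ → ℝ
  | 0 => (ε / (1 - ε)) * (π10 / π11)
  | n + 1 => f₁ π00 π01 π10 π11 ε (loseq π00 π01 π10 π11 ε n)

section Meas
variable {π00 π01 π10 π11 ε p₀ p₁ : ℝ} {Q : Measure ℝ}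

lemma r_meas (a b : ℝ) : Measurable (fun x : ℝ => ENNReal.ofReal ((a * x + b) / (x + 1))) := by
  apply ENNReal.measurable_ofReal.comp
  exact ((measurable_id.const_mul a).add_const b).div (measurable_id.add_const 1)

lemma r₀_meas : Measurable (fun x : ℝ => ENNReal.ofReal (r₀ π00 π01 π10 π11 ε x)) := r_meas _ _
lemma r₁_meas : Measurable (fun x : ℝ => ENNReal.ofReal (r₁ π00 π01 π10 π11 ε x)) := r_meas _ _

variable (h00 : 0 < π00) (h01 : 0 < π01) (h10 : 0 < π10) (h11 : 0 < π11)
  (hε0 : 0 < ε) (hε : ε < 1 / 2)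

include hε0 hε in
lemma eps_facts : 0 < 1 - ε ∧ 0 < (1 - ε) / ε ∧ 0 < ε / (1 - ε) ∧ ε / (1-ε) < (1-ε)/ε := by
  have h1 : 0 < 1 - ε := by linarith
  refine ⟨h1, by positivity, by positivity, ?_⟩
  rw [div_lt_div_iff₀ h1 hε0]
  nlinarith

include h00 h01 h10 h11 hε0 hε in
lemma r₀_pos {x : ℝ} (hx : 0 < x) : 0 < r₀ π00 π01 π10 π11 ε x := by
  have h1 : 0 < 1 - ε := by linarith
  unfold r₀; positivity

include h00 h01 h10 h11 hε0 hε in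
lemma r₁_pos {x : ℝ} (hx : 0 < x) : 0 < r₁ π00 π01 π10 π11 ε x := by
  have h1 : 0 < 1 - ε := by linarith
  unfold r₁; positivity

end Meas

end Helpers
section Wrap
open Set Real
variable {π00 π01 π10 π11 ε : ℝ}
  (h00 : 0 < π00) (h01 : 0 < π01) (h10 : 0 < π10) (h11 : 0 < π11)
  (hdet : 0 < π00 * π11 - π01 * π10) (hε0 : 0 < ε) (hε : ε < 1 / 2)

include hε0 hε in
lemma c0_pos : 0 < (1 - ε) / ε := by
  have : 0 < 1 - ε := by linarith
  positivity

include hε0 hε in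
lemma c1_pos : 0 < ε / (1 - ε) := by
  have : 0 < 1 - ε := by linarith
  positivity

include h00 h01 h10 h11 hε0 hε in
lemma f0_pos {x : ℝ} (hx : 0 ≤ x) : 0 < f₀ π00 π01 π10 π11 ε x :=
  mob_pos h00 h01 h10 h11 (c0_pos hε0 hε) hx

include h00 h01 h10 h11 hε0 hε in
lemma f1_pos {x : ℝ} (hx : 0 ≤ x) : 0 < f₁ π00 π01 π10 π11 ε x :=
  mob_pos h00 h01 h10 h11 (c1_pos hε0 hε) hx

include h00 h01 h10 h11 hdet hε0 hε in
lemma f0_strictMono {x y : ℝ} (hx : 0 ≤ x) (hxy : x < y) :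
    f₀ π00 π01 π10 π11 ε x < f₀ π00 π01 π10 π11 ε y :=
  mob_strictMono h00 h01 h10 h11 hdet (c0_pos hε0 hε) hx hxy

include h00 h01 h10 h11 hdet hε0 hε in
lemma f1_strictMono {x y : ℝ} (hx : 0 ≤ x) (hxy : x < y) :
    f₁ π00 π01 π10 π11 ε x < f₁ π00 π01 π10 π11 ε y :=
  mob_strictMono h00 h01 h10 h11 hdet (c1_pos hε0 hε) hx hxy

include h00 h01 h10 h11 hdet hε0 hε in
lemma f0_mono {x y : ℝ} (hx : 0 ≤ x) (hxy : x ≤ y) :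
    f₀ π00 π01 π10 π11 ε x ≤ f₀ π00 π01 π10 π11 ε y :=
  mob_mono h00 h01 h10 h11 hdet (c0_pos hε0 hε) hx hxy

include h00 h01 h10 h11 hdet hε0 hε in
lemma f1_mono {x y : ℝ} (hx : 0 ≤ x) (hxy : x ≤ y) :
    f₁ π00 π01 π10 π11 ε x ≤ f₁ π00 π01 π10 π11 ε y :=
  mob_mono h00 h01 h10 h11 hdet (c1_pos hε0 hε) hx hxy

include h00 h01 h10 h11 hε0 hε in
lemma f0_sign {p : ℝ} (hp : 0 < p) (hfix : f₀ π00 π01 π10 π11 ε p = p) :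
    (∀ x, 0 ≤ x → x < p → x < f₀ π00 π01 π10 π11 ε x) ∧
    (∀ x, p < x → f₀ π00 π01 π10 π11 ε x < x) :=
  mob_fixed_sign h00 h01 h10 h11 (c0_pos hε0 hε) hp hfix

include h00 h01 h10 h11 hε0 hε in
lemma f1_sign {p : ℝ} (hp : 0 < p) (hfix : f₁ π00 π01 π10 π11 ε p = p) :
    (∀ x, 0 ≤ x → x < p → x < f₁ π00 π01 π10 π11 ε x) ∧
    (∀ x, p < x → f₁ π00 π01 π10 π11 ε x < x) :=
  mob_fixed_sign h00 h01 h10 h11 (c1_pos hε0 hε) hp hfix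

include h00 h01 h10 h11 hdet hε0 hε in
lemma f0_lt_sup {x : ℝ} (hx : 0 ≤ x) :
    f₀ π00 π01 π10 π11 ε x < ((1 - ε) / ε) * (π00 / π01) :=
  mob_lt_sup h00 h01 h10 h11 hdet (c0_pos hε0 hε) hx

include h01 h11 in
lemma f0_contAt {x : ℝ} (hx : 0 ≤ x) : ContinuousAt (f₀ π00 π01 π10 π11 ε) x :=
  mob_continuousAt h01 h11 hx

include h01 h11 in
lemma f1_contAt {x : ℝ} (hx : 0 ≤ x) : ContinuousAt (f₁ π00 π01 π10 π11 ε) x :=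
  mob_continuousAt h01 h11 hx

include h00 h01 h10 h11 hdet hε0 hε in
lemma f0_logcontract {x y : ℝ} (hx : 0 < x) (hy : 0 < y) :
    |Real.log (f₀ π00 π01 π10 π11 ε x) - Real.log (f₀ π00 π01 π10 π11 ε y)|
      ≤ tau π00 π01 π10 π11 * |Real.log x - Real.log y| :=
  mob_log_contract h00 h01 h10 h11 hdet (c0_pos hε0 hε) hx hy

include h00 h01 h10 h11 hdet hε0 hε in
lemma f1_logcontract {x y : ℝ} (hx : 0 < x) (hy : 0 < y) :
    |Real.log (f₁ π00 π01 π10 π11 ε x) - Real.log (f₁ π00 π01 π10 π11 ε y)|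
      ≤ tau π00 π01 π10 π11 * |Real.log x - Real.log y| :=
  mob_log_contract h00 h01 h10 h11 hdet (c1_pos hε0 hε) hx hy

include h00 h01 h10 h11 hε0 hε in
lemma flt_pointwise {x : ℝ} (hx : 0 ≤ x) :
    f₁ π00 π01 π10 π11 ε x < f₀ π00 π01 π10 π11 ε x := by
  have h1 : 0 < 1 - ε := by linarith
  have hcc : ε / (1 - ε) < (1 - ε) / ε := by
    rw [div_lt_div_iff₀ h1 hε0]; nlinarith
  have hg : 0 < (π00 * x + π10) / (π01 * x + π11) :=
    div_pos (num_pos h00 h10 hx) (denom_pos h01 h11 hx)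
  exact mul_lt_mul_of_pos_right hcc hg

lemma f0_meas : Measurable (f₀ π00 π01 π10 π11 ε) := by
  have : Measurable (fun x : ℝ => ((1 - ε) / ε) * ((π00 * x + π10) / (π01 * x + π11))) :=
    ((((measurable_id.const_mul π00).add_const π10).div
      ((measurable_id.const_mul π01).add_const π11)).const_mul _)
  exact this

lemma f1_meas : Measurable (f₁ π00 π01 π10 π11 ε) := by
  have : Measurable (fun x : ℝ => (ε / (1 - ε)) * ((π00 * x + π10) / (π01 * x + π11))) :=
    ((((measurable_id.const_mul π00).add_const π10).div
      ((measurable_id.const_mul π01).add_const π11)).const_mul _)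
  exact this

lemma f1_zero : f₁ π00 π01 π10 π11 ε 0 = (ε / (1 - ε)) * (π10 / π11) := by
  simp [f₁]

end Wrap

/-- Cantor-set case of Theorem 3.3: in the non-overlapping case
`f_0(I) ∪ f_1(I) ⊊ I`, the support of Blackwell's measure is a Cantor set:
a nonempty compact subset of `I` that is totally disconnected and perfect. -/
theorem support_blackwell_cantor (π00 π01 π10 π11 ε : ℝ)
    (h00 : 0 < π00) (h01 : 0 < π01) (h10 : 0 < π10) (h11 : 0 < π11)
    (hrow0 : π00 + π01 = 1) (hrow1 : π10 + π11 = 1)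
    (hdet : 0 < π00 * π11 - π01 * π10)
    (hε0 : 0 < ε) (hε : ε < 1 / 2)
    (p₀ p₁ : ℝ) (hp₀ : 0 < p₀) (hp₁ : 0 < p₁)
    (hfix₀ : f₀ π00 π01 π10 π11 ε p₀ = p₀) (hfix₁ : f₁ π00 π01 π10 π11 ε p₁ = p₁)
    (huniq₀ : ∀ q : ℝ, 0 < q → f₀ π00 π01 π10 π11 ε q = q → q = p₀)
    (huniq₁ : ∀ q : ℝ, 0 < q → f₁ π00 π01 π10 π11 ε q = q → q = p₁)
    (Q : MeasureTheory.Measure ℝ) [MeasureTheory.IsProbabilityMeasure Q]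
    (hQpos : Q (Set.Ioi 0) = 1)
    (hQinv : BlackwellInvariant π00 π01 π10 π11 ε Q)
    (hnonoverlap :
      (f₀ π00 π01 π10 π11 ε '' Set.Icc p₁ p₀ ∪ f₁ π00 π01 π10 π11 ε '' Set.Icc p₁ p₀)
        ⊂ Set.Icc p₁ p₀) :
    (measSupp Q).Nonempty ∧ IsCompact (measSupp Q) ∧ measSupp Q ⊆ Set.Icc p₁ p₀ ∧
      IsTotallyDisconnected (measSupp Q) ∧ Perfect (measSupp Q) := by
  -- ### order of the fixed points
  have hple : p₁ ≤ p₀ := by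
    by_contra h
    push_neg at h
    rw [Set.Icc_eq_empty (not_le.mpr h)] at hnonoverlap
    have h2 := hnonoverlap.subset
    rw [Set.subset_empty_iff] at h2
    exact hnonoverlap.ne h2
  have hplt : p₁ < p₀ := by
    rcases eq_or_lt_of_le hple with heq | h
    · exfalso
      have h1 := flt_pointwise h00 h01 h10 h11 hε0 hε hp₁.le
      rw [hfix₁, heq, hfix₀] at h1
      exact lt_irrefl _ (heq ▸ h1)
    · exact h
  have hsign₀ := f0_sign h00 h01 h10 h11 hε0 hε hp₀ hfix₀
  have hsign₁ := f1_sign h00 h01 h10 h11 hε0 hε hp₁ hfix₁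
  -- ### Q vanishes off (0, ∞)
  have hcompl0 : Q (Set.Ioi (0:ℝ))ᶜ = 0 := by
    rw [prob_compl_eq_one_sub measurableSet_Ioi, hQpos]
    simp
  -- ### the step lemma for proving null sets
  have hstep : ∀ E C : Set ℝ, MeasurableSet E → E ⊆ Set.Ioi 0 → Q C = 0 →
      f₀ π00 π01 π10 π11 ε ⁻¹' E ⊆ C ∪ (Set.Ioi (0:ℝ))ᶜ →
      f₁ π00 π01 π10 π11 ε ⁻¹' E ⊆ C ∪ (Set.Ioi (0:ℝ))ᶜ → Q E = 0 := by
    intro E C hE hEsub hC h0 h1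
    have hCU : Q (C ∪ (Set.Ioi (0:ℝ))ᶜ) = 0 := measure_union_null hC hcompl0
    rw [hQinv E hE hEsub,
      setLIntegral_measure_zero _ _ (measure_mono_null h0 hCU),
      setLIntegral_measure_zero _ _ (measure_mono_null h1 hCU), add_zero]
  -- ### the decreasing sequence to p₀
  set u : ℕ → ℝ := upseq π00 π01 π10 π11 ε with hu
  have hu0 : u 0 = ((1 - ε) / ε) * (π00 / π01) := rfl
  have husucc : ∀ n, u (n + 1) = f₀ π00 π01 π10 π11 ε (u n) := fun n => rfl
  have hup₀ : ∀ n, p₀ ≤ u n := by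
    intro n
    induction n with
    | zero =>
      have h1 := f0_lt_sup h00 h01 h10 h11 hdet hε0 hε hp₀.le
      rw [hfix₀] at h1
      rw [hu0]; exact h1.le
    | succ n ih =>
      rw [husucc]
      calc p₀ = f₀ π00 π01 π10 π11 ε p₀ := hfix₀.symm
        _ ≤ _ := f0_mono h00 h01 h10 h11 hdet hε0 hε hp₀.le ih
  have hupos : ∀ n, 0 < u n := fun n => lt_of_lt_of_le hp₀ (hup₀ n)
  have huanti : Antitone u := by
    apply antitone_nat_of_succ_le
    intro n
    rw [husucc]
    rcases eq_or_lt_of_le (hup₀ n) with heq | hlt'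
    · rw [← heq, hfix₀]
    · exact (hsign₀.2 (u n) hlt').le
  have hubb : BddBelow (Set.range u) := ⟨p₀, by rintro y ⟨n, rfl⟩; exact hup₀ n⟩
  have hulim : Filter.Tendsto u Filter.atTop (nhds (⨅ n, u n)) :=
    tendsto_atTop_ciInf huanti hubb
  have hLp₀ : (⨅ n, u n) = p₀ := by
    have hLge : p₀ ≤ ⨅ n, u n := le_ciInf hup₀
    have ht2 : Filter.Tendsto (fun n => f₀ π00 π01 π10 π11 ε (u n)) Filter.atTop
        (nhds (f₀ π00 π01 π10 π11 ε (⨅ n, u n))) :=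
      ((f0_contAt h01 h11 (le_trans hp₀.le hLge)).tendsto).comp hulim
    have ht1 : Filter.Tendsto (fun n => f₀ π00 π01 π10 π11 ε (u n)) Filter.atTop
        (nhds (⨅ n, u n)) := by
      have h3 := hulim.comp (Filter.tendsto_add_atTop_nat 1)
      exact h3.congr (fun n => husucc n)
    have hfixL : f₀ π00 π01 π10 π11 ε (⨅ n, u n) = (⨅ n, u n) :=
      tendsto_nhds_unique ht2 ht1
    rcases eq_or_lt_of_le hLge with heq | hlt'
    · exact heq.symm
    · exact absurd hfixL (ne_of_lt (hsign₀.2 _ hlt'))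
  have hunull : ∀ n, Q (Set.Ioi (u n)) = 0 := by
    intro n
    induction n with
    | zero =>
      apply hstep _ ∅ measurableSet_Ioi (fun x hx => lt_trans (hupos 0) hx) measure_empty
      · intro x hx
        have hx' : u 0 < f₀ π00 π01 π10 π11 ε x := hx
        right
        intro hx0
        have h2 : f₀ π00 π01 π10 π11 ε x < u 0 := by
          rw [hu0]; exact f0_lt_sup h00 h01 h10 h11 hdet hε0 hε (le_of_lt hx0)
        exact lt_asymm hx' h2
      · intro x hx
        have hx' : u 0 < f₁ π00 π01 π10 π11 ε x := hx
        right
        intro hx0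
        have h2 : f₀ π00 π01 π10 π11 ε x < u 0 := by
          rw [hu0]; exact f0_lt_sup h00 h01 h10 h11 hdet hε0 hε (le_of_lt hx0)
        have h3 := flt_pointwise h00 h01 h10 h11 hε0 hε (le_of_lt hx0)
        exact lt_asymm hx' (lt_trans h3 h2)
    | succ n ih =>
      apply hstep _ (Set.Ioi (u n)) measurableSet_Ioi
        (fun x hx => lt_trans (hupos (n+1)) hx) ih
      · intro x hx
        have hx' : u (n+1) < f₀ π00 π01 π10 π11 ε x := hx
        by_cases hx0 : 0 < x
        · left
          show u n < x
          by_contra hle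
          push_neg at hle
          have h2 : f₀ π00 π01 π10 π11 ε x ≤ u (n+1) := by
            rw [husucc]
            exact f0_mono h00 h01 h10 h11 hdet hε0 hε hx0.le hle
          exact absurd hx' (not_lt.mpr h2)
        · right; simpa using hx0
      · intro x hx
        have hx' : u (n+1) < f₁ π00 π01 π10 π11 ε x := hx
        by_cases hx0 : 0 < x
        · left
          show u n < x
          by_contra hle
          push_neg at hle
          have h2 : f₀ π00 π01 π10 π11 ε x ≤ u (n+1) := by
            rw [husucc]
            exact f0_mono h00 h01 h10 h11 hdet hε0 hε hx0.le hle
          have h3 := flt_pointwise h00 h01 h10 h11 hε0 hε hx0.le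
          exact absurd hx' (not_lt.mpr (le_of_lt (lt_of_lt_of_le h3 h2)))
        · right; simpa using hx0
  -- ### the increasing sequence to p₁
  set l : ℕ → ℝ := loseq π00 π01 π10 π11 ε with hl
  have hl0 : l 0 = (ε / (1 - ε)) * (π10 / π11) := rfl
  have hlsucc : ∀ n, l (n + 1) = f₁ π00 π01 π10 π11 ε (l n) := fun n => rfl
  have hl0f : f₁ π00 π01 π10 π11 ε 0 = l 0 := by
    rw [hl0]; exact f1_zero
  have hlp : ∀ n, 0 < l n ∧ l n < p₁ := by
    intro n
    induction n with
    | zero =>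
      constructor
      · rw [hl0]
        have h1 : 0 < 1 - ε := by linarith
        positivity
      · calc l 0 = f₁ π00 π01 π10 π11 ε 0 := hl0f.symm
          _ < f₁ π00 π01 π10 π11 ε p₁ := f1_strictMono h00 h01 h10 h11 hdet hε0 hε le_rfl hp₁
          _ = p₁ := hfix₁
    | succ n ih =>
      constructor
      · rw [hlsucc]
        exact f1_pos h00 h01 h10 h11 hε0 hε ih.1.le
      · rw [hlsucc]
        calc f₁ π00 π01 π10 π11 ε (l n) < f₁ π00 π01 π10 π11 ε p₁ :=
            f1_strictMono h00 h01 h10 h11 hdet hε0 hε ih.1.le ih.2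
          _ = p₁ := hfix₁
  have hlmono : Monotone l := by
    apply monotone_nat_of_le_succ
    intro n
    rw [hlsucc]
    exact (hsign₁.1 (l n) (hlp n).1.le (hlp n).2).le
  have hlbb : BddAbove (Set.range l) := ⟨p₁, by rintro y ⟨n, rfl⟩; exact (hlp n).2.le⟩
  have hllim : Filter.Tendsto l Filter.atTop (nhds (⨆ n, l n)) :=
    tendsto_atTop_ciSup hlmono hlbb
  have hMp₁ : (⨆ n, l n) = p₁ := by
    have hMle : (⨆ n, l n) ≤ p₁ := ciSup_le (fun n => (hlp n).2.le)
    have hMpos : 0 < ⨆ n, l n := lt_of_lt_of_le (hlp 0).1 (le_ciSup hlbb 0)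
    have ht2 : Filter.Tendsto (fun n => f₁ π00 π01 π10 π11 ε (l n)) Filter.atTop
        (nhds (f₁ π00 π01 π10 π11 ε (⨆ n, l n))) :=
      ((f1_contAt h01 h11 hMpos.le).tendsto).comp hllim
    have ht1 : Filter.Tendsto (fun n => f₁ π00 π01 π10 π11 ε (l n)) Filter.atTop
        (nhds (⨆ n, l n)) := by
      have h3 := hllim.comp (Filter.tendsto_add_atTop_nat 1)
      exact h3.congr (fun n => hlsucc n)
    have hfixM : f₁ π00 π01 π10 π11 ε (⨆ n, l n) = (⨆ n, l n) :=
      tendsto_nhds_unique ht2 ht1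
    rcases eq_or_lt_of_le hMle with heq | hlt'
    · exact heq
    · exact absurd hfixM (ne_of_gt (hsign₁.1 _ hMpos.le hlt'))
  have hlnull : ∀ n, Q (Set.Ioc 0 (l n)) = 0 := by
    intro n
    induction n with
    | zero =>
      apply hstep _ ∅ measurableSet_Ioc (fun x hx => hx.1) measure_empty
      · intro x hx
        have hx' : f₀ π00 π01 π10 π11 ε x ∈ Set.Ioc 0 (l 0) := hx
        right
        intro hx0
        have h1 : l 0 < f₁ π00 π01 π10 π11 ε x := by
          rw [← hl0f]
          exact f1_strictMono h00 h01 h10 h11 hdet hε0 hε le_rfl hx0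
        have h2 := flt_pointwise h00 h01 h10 h11 hε0 hε hx0.le
        exact absurd hx'.2 (not_le.mpr (lt_trans h1 h2))
      · intro x hx
        have hx' : f₁ π00 π01 π10 π11 ε x ∈ Set.Ioc 0 (l 0) := hx
        right
        intro hx0
        have h1 : l 0 < f₁ π00 π01 π10 π11 ε x := by
          rw [← hl0f]
          exact f1_strictMono h00 h01 h10 h11 hdet hε0 hε le_rfl hx0
        exact absurd hx'.2 (not_le.mpr h1)
    | succ n ih =>
      apply hstep _ (Set.Ioc 0 (l n)) measurableSet_Ioc (fun x hx => hx.1) ih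
      · intro x hx
        have hx' : f₀ π00 π01 π10 π11 ε x ∈ Set.Ioc 0 (l (n+1)) := hx
        by_cases hx0 : 0 < x
        · left
          refine ⟨hx0, ?_⟩
          by_contra hgt
          push_neg at hgt
          have h1 : l (n+1) < f₁ π00 π01 π10 π11 ε x := by
            rw [hlsucc]
            exact f1_strictMono h00 h01 h10 h11 hdet hε0 hε (hlp n).1.le hgt
          have h2 := flt_pointwise h00 h01 h10 h11 hε0 hε hx0.le
          exact absurd hx'.2 (not_le.mpr (lt_trans h1 h2))
        · right; simpa using hx0
      · intro x hx
        have hx' : f₁ π00 π01 π10 π11 ε x ∈ Set.Ioc 0 (l (n+1)) := hx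
        by_cases hx0 : 0 < x
        · left
          refine ⟨hx0, ?_⟩
          by_contra hgt
          push_neg at hgt
          have h1 : l (n+1) < f₁ π00 π01 π10 π11 ε x := by
            rw [hlsucc]
            exact f1_strictMono h00 h01 h10 h11 hdet hε0 hε (hlp n).1.le hgt
          exact absurd hx'.2 (not_le.mpr h1)
        · right; simpa using hx0
  -- ### Q is concentrated on the interval I
  have hIccnull : Q (Set.Icc p₁ p₀)ᶜ = 0 := by
    have hsub : (Set.Icc p₁ p₀)ᶜ ⊆
        (Set.Ioi (0:ℝ))ᶜ ∪ ((⋃ n, Set.Ioc 0 (l n)) ∪ ⋃ n, Set.Ioi (u n)) := by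
      intro x hx
      rw [Set.mem_compl_iff, Set.mem_Icc, not_and_or] at hx
      rcases hx with hx | hx
      · push_neg at hx
        by_cases hx0 : 0 < x
        · refine Or.inr (Or.inl ?_)
          have hev : ∀ᶠ n in Filter.atTop, x < l n :=
            (tendsto_order.1 hllim).1 x (by rw [hMp₁]; exact hx)
          obtain ⟨n, hn⟩ := hev.exists
          exact Set.mem_iUnion.mpr ⟨n, hx0, hn.le⟩
        · exact Or.inl (by simpa using hx0)
      · push_neg at hx
        refine Or.inr (Or.inr ?_)
        have hev : ∀ᶠ n in Filter.atTop, u n < x :=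
          (tendsto_order.1 hulim).2 x (by rw [hLp₀]; exact hx)
        obtain ⟨n, hn⟩ := hev.exists
        exact Set.mem_iUnion.mpr ⟨n, hn⟩
    exact measure_mono_null hsub (measure_union_null hcompl0
      (measure_union_null (measure_iUnion_null hlnull) (measure_iUnion_null hunull)))
  -- ### facts about the support
  have hSclosed := measSupp_closed Q
  have hSsub : measSupp Q ⊆ Set.Icc p₁ p₀ := measSupp_subset_of_null isClosed_Icc hIccnull
  have hScompact : IsCompact (measSupp Q) :=
    IsCompact.of_isClosed_subset isCompact_Icc hSclosed hSsub
  have hSne : (measSupp Q).Nonempty := measSupp_nonempty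
  have hSnull := measSupp_compl_null Q
  have hSpos : ∀ x ∈ measSupp Q, 0 < x := fun x hx => lt_of_lt_of_le hp₁ (hSsub hx).1
  -- ### positivity of set integrals
  have hpos_int : ∀ (A : Set ℝ) (rb : ℝ → ℝ),
      Measurable (fun x => ENNReal.ofReal (rb x)) →
      (∀ x : ℝ, 0 < x → 0 < rb x) → ∀ W : Set ℝ, MeasurableSet W → W ⊆ A →
      W ⊆ Set.Ioi 0 → 0 < Q W → 0 < ∫⁻ x in A, ENNReal.ofReal (rb x) ∂Q := by
    intro A rb hmeas hrb W hWm hWA hWpos hQW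
    rw [lintegral_pos_iff_support hmeas]
    have hWs : W ⊆ Function.support (fun x => ENNReal.ofReal (rb x)) := by
      intro y hy
      exact Function.mem_support.mpr (ENNReal.ofReal_pos.mpr (hrb y (hWpos hy))).ne'
    calc (0 : ENNReal) < Q W := hQW
      _ = Q.restrict A W := by
          rw [Measure.restrict_apply hWm, Set.inter_eq_self_of_subset_left hWA]
      _ ≤ _ := measure_mono hWs
  have hpos_rev : ∀ (A : Set ℝ) (rb : ℝ → ℝ),
      Measurable (fun x => ENNReal.ofReal (rb x)) → MeasurableSet A →
      (0 < ∫⁻ x in A, ENNReal.ofReal (rb x) ∂Q) → 0 < Q (A ∩ Set.Ioi 0) := by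
    intro A rb hmeas hA hint
    rw [lintegral_pos_iff_support hmeas, Measure.restrict_apply' hA] at hint
    by_contra h
    push_neg at h
    rw [nonpos_iff_eq_zero] at h
    have hzero : Q (Function.support (fun x => ENNReal.ofReal (rb x)) ∩ A) = 0 := by
      apply measure_mono_null _ (measure_union_null h hcompl0)
      intro y hy
      by_cases hy0 : 0 < y
      · exact Or.inl ⟨hy.2, hy0⟩
      · exact Or.inr (by simpa using hy0)
    rw [hzero] at hint
    exact lt_irrefl 0 hint
  -- ### forward invariance of the support
  have hcontOn₀ : ContinuousOn (f₀ π00 π01 π10 π11 ε) (Set.Ioi 0) :=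
    fun x hx => (f0_contAt h01 h11 (le_of_lt hx)).continuousWithinAt
  have hcontOn₁ : ContinuousOn (f₁ π00 π01 π10 π11 ε) (Set.Ioi 0) :=
    fun x hx => (f1_contAt h01 h11 (le_of_lt hx)).continuousWithinAt
  have hfwd : ∀ x ∈ measSupp Q, f₀ π00 π01 π10 π11 ε x ∈ measSupp Q ∧
      f₁ π00 π01 π10 π11 ε x ∈ measSupp Q := by
    intro x hx
    have hx0 : 0 < x := hSpos x hx
    have main : ∀ (g : ℝ → ℝ) (rb : ℝ → ℝ), ContinuousOn g (Set.Ioi 0) →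
        (∀ y : ℝ, 0 < y → 0 < g y) → Measurable (fun y => ENNReal.ofReal (rb y)) →
        (∀ y : ℝ, 0 < y → 0 < rb y) →
        (∀ E : Set ℝ, MeasurableSet E → E ⊆ Set.Ioi 0 →
          (∫⁻ y in g ⁻¹' E, ENNReal.ofReal (rb y) ∂Q) ≤ Q E) →
        g x ∈ measSupp Q := by
      intro g rb hgcont hgpos hrmeas hrpos hle
      intro U hUopen hxU
      have hEopen : IsOpen (U ∩ Set.Ioi 0) := hUopen.inter isOpen_Ioi
      have hEm : MeasurableSet (U ∩ Set.Ioi 0) := hEopen.measurableSet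
      have hfxE : g x ∈ U ∩ Set.Ioi 0 := ⟨hxU, hgpos x hx0⟩
      have hWopen : IsOpen (Set.Ioi 0 ∩ g ⁻¹' (U ∩ Set.Ioi 0)) :=
        hgcont.isOpen_inter_preimage isOpen_Ioi hEopen
      have hQW : 0 < Q (Set.Ioi 0 ∩ g ⁻¹' (U ∩ Set.Ioi 0)) := hx _ hWopen ⟨hx0, hfxE⟩
      have hI : 0 < ∫⁻ y in g ⁻¹' (U ∩ Set.Ioi 0), ENNReal.ofReal (rb y) ∂Q :=
        hpos_int _ _ hrmeas hrpos _ hWopen.measurableSet Set.inter_subset_right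
          Set.inter_subset_left hQW
      calc (0 : ENNReal) < _ := hI
        _ ≤ Q (U ∩ Set.Ioi 0) := hle _ hEm Set.inter_subset_right
        _ ≤ Q U := measure_mono Set.inter_subset_left
    constructor
    · apply main _ (r₀ π00 π01 π10 π11 ε) hcontOn₀
        (fun y hy => f0_pos h00 h01 h10 h11 hε0 hε hy.le) r₀_meas
        (fun y hy => r₀_pos h00 h01 h10 h11 hε0 hε hy)
      intro E hEm hEsub
      rw [hQinv E hEm hEsub]
      exact le_self_add
    · apply main _ (r₁ π00 π01 π10 π11 ε) hcontOn₁
        (fun y hy => f1_pos h00 h01 h10 h11 hε0 hε hy.le) r₁_meas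
        (fun y hy => r₁_pos h00 h01 h10 h11 hε0 hε hy)
      intro E hEm hEsub
      rw [hQinv E hEm hEsub]
      exact le_add_self
  -- ### self-similarity of the support
  have hcontS₀ : ContinuousOn (f₀ π00 π01 π10 π11 ε) (measSupp Q) :=
    hcontOn₀.mono (fun x hx => hSpos x hx)
  have hcontS₁ : ContinuousOn (f₁ π00 π01 π10 π11 ε) (measSupp Q) :=
    hcontOn₁.mono (fun x hx => hSpos x hx)
  have himg₀ : IsCompact (f₀ π00 π01 π10 π11 ε '' measSupp Q) :=
    hScompact.image_of_continuousOn hcontS₀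
  have himg₁ : IsCompact (f₁ π00 π01 π10 π11 ε '' measSupp Q) :=
    hScompact.image_of_continuousOn hcontS₁
  have hself : measSupp Q =
      f₀ π00 π01 π10 π11 ε '' measSupp Q ∪ f₁ π00 π01 π10 π11 ε '' measSupp Q := by
    apply Set.Subset.antisymm
    · intro x hx
      by_contra hnot
      set V := (f₀ π00 π01 π10 π11 ε '' measSupp Q ∪ f₁ π00 π01 π10 π11 ε '' measSupp Q)ᶜ
        with hV
      have hUopen : IsOpen V := (himg₀.isClosed.union himg₁.isClosed).isOpen_compl
      have hQU : 0 < Q V := hx _ hUopen hnot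
      have hEm : MeasurableSet (V ∩ Set.Ioi 0) :=
        hUopen.measurableSet.inter measurableSet_Ioi
      have hQE : 0 < Q (V ∩ Set.Ioi 0) := by
        by_contra h
        push_neg at h
        rw [nonpos_iff_eq_zero] at h
        have hVnull : Q V = 0 := by
          apply measure_mono_null _ (measure_union_null h hcompl0)
          intro y hy
          by_cases h0 : 0 < y
          · exact Or.inl ⟨hy, h0⟩
          · exact Or.inr (by simpa using h0)
        rw [hVnull] at hQU
        exact lt_irrefl 0 hQU
      rw [hQinv _ hEm Set.inter_subset_right] at hQE
      have hpoint : ∀ g : ℝ → ℝ, Measurable g →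
          (∀ s ∈ measSupp Q, g s ∈ (f₀ π00 π01 π10 π11 ε '' measSupp Q ∪
            f₁ π00 π01 π10 π11 ε '' measSupp Q)) →
          0 < Q (g ⁻¹' (V ∩ Set.Ioi 0) ∩ Set.Ioi 0) → False := by
        intro g hgm hgim hpos
        have hQT : 0 < Q ((g ⁻¹' (V ∩ Set.Ioi 0) ∩ Set.Ioi 0) ∩ measSupp Q) := by
          by_contra h
          push_neg at h
          rw [nonpos_iff_eq_zero] at h
          have hTnull : Q (g ⁻¹' (V ∩ Set.Ioi 0) ∩ Set.Ioi 0) = 0 := by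
            apply measure_mono_null _ (measure_union_null h hSnull)
            intro y hy
            by_cases hyS : y ∈ measSupp Q
            · exact Or.inl ⟨hy, hyS⟩
            · exact Or.inr hyS
          rw [hTnull] at hpos
          exact lt_irrefl 0 hpos
        obtain ⟨y, ⟨⟨hyE, hy0⟩, hyS⟩⟩ := nonempty_of_measure_ne_zero hQT.ne'
        have h1 : g y ∈ V := hyE.1
        have h2 := hgim y hyS
        rw [hV] at h1
        exact h1 h2
      rcases (zero_le : (0 : ENNReal) ≤ (∫⁻ y in f₀ π00 π01 π10 π11 ε ⁻¹' (V ∩ Set.Ioi 0),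
          ENNReal.ofReal (r₀ π00 π01 π10 π11 ε y) ∂Q)).lt_or_eq with h | h
      · exact hpoint _ (f0_meas) (fun s hs => Or.inl ⟨s, hs, rfl⟩)
          (hpos_rev _ _ r₀_meas (f0_meas hEm) h)
      · rw [← h, zero_add] at hQE
        exact hpoint _ (f1_meas) (fun s hs => Or.inr ⟨s, hs, rfl⟩)
          (hpos_rev _ _ r₁_meas (f1_meas hEm) hQE)
    · rintro x (⟨s, hsS, rfl⟩ | ⟨s, hsS, rfl⟩)
      · exact (hfwd s hsS).1
      · exact (hfwd s hsS).2
  -- ### the maps preserve I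
  have hmapsI₀ : Set.MapsTo (f₀ π00 π01 π10 π11 ε) (Set.Icc p₁ p₀) (Set.Icc p₁ p₀) := by
    intro s hs
    have hs0 : 0 ≤ s := le_trans hp₁.le hs.1
    constructor
    · have h1 : p₁ < f₀ π00 π01 π10 π11 ε p₁ := by
        calc p₁ = f₁ π00 π01 π10 π11 ε p₁ := hfix₁.symm
          _ < f₀ π00 π01 π10 π11 ε p₁ := flt_pointwise h00 h01 h10 h11 hε0 hε hp₁.le
      exact le_of_lt (lt_of_lt_of_le h1
        (f0_mono h00 h01 h10 h11 hdet hε0 hε hp₁.le hs.1))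
    · calc f₀ π00 π01 π10 π11 ε s ≤ f₀ π00 π01 π10 π11 ε p₀ :=
          f0_mono h00 h01 h10 h11 hdet hε0 hε hs0 hs.2
        _ = p₀ := hfix₀
  have hmapsI₁ : Set.MapsTo (f₁ π00 π01 π10 π11 ε) (Set.Icc p₁ p₀) (Set.Icc p₁ p₀) := by
    intro s hs
    have hs0 : 0 ≤ s := le_trans hp₁.le hs.1
    constructor
    · calc p₁ = f₁ π00 π01 π10 π11 ε p₁ := hfix₁.symm
        _ ≤ f₁ π00 π01 π10 π11 ε s := f1_mono h00 h01 h10 h11 hdet hε0 hε hp₁.le hs.1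
    · have h1 : f₁ π00 π01 π10 π11 ε p₀ < p₀ := by
        calc f₁ π00 π01 π10 π11 ε p₀ < f₀ π00 π01 π10 π11 ε p₀ :=
            flt_pointwise h00 h01 h10 h11 hε0 hε hp₀.le
          _ = p₀ := hfix₀
      exact le_of_lt (lt_of_le_of_lt
        (f1_mono h00 h01 h10 h11 hdet hε0 hε hs0 hs.2) h1)
  -- ### the gap
  have hγδ : f₁ π00 π01 π10 π11 ε p₀ < f₀ π00 π01 π10 π11 ε p₁ := by
    by_contra h
    push_neg at h
    apply hnonoverlap.ne
    apply Set.Subset.antisymm hnonoverlap.subset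
    intro t ht
    by_cases hcase : t ≤ f₁ π00 π01 π10 π11 ε p₀
    · right
      have hIVT : Set.Icc (f₁ π00 π01 π10 π11 ε p₁) (f₁ π00 π01 π10 π11 ε p₀) ⊆
          f₁ π00 π01 π10 π11 ε '' Set.Icc p₁ p₀ :=
        intermediate_value_Icc hple
          (hcontOn₁.mono (fun x hx => lt_of_lt_of_le hp₁ hx.1))
      exact hIVT ⟨by rw [hfix₁]; exact ht.1, hcase⟩
    · left
      push_neg at hcase
      have hIVT : Set.Icc (f₀ π00 π01 π10 π11 ε p₁) (f₀ π00 π01 π10 π11 ε p₀) ⊆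
          f₀ π00 π01 π10 π11 ε '' Set.Icc p₁ p₀ :=
        intermediate_value_Icc hple
          (hcontOn₀.mono (fun x hx => lt_of_lt_of_le hp₁ hx.1))
      exact hIVT ⟨le_of_lt (lt_of_le_of_lt h hcase), by rw [hfix₀]; exact ht.2⟩
  -- ### assemble via the abstract Cantor lemma
  have hτpos := tau_pos h00 h01 h10 h11 hdet
  have hτ1 := tau_lt_one h00 h01 h10 h11 hdet
  obtain ⟨htd, hperf⟩ := cantor_abstract hp₁ hplt hSclosed hSsub hSne hself hτpos.le hτ1
    hmapsI₀ hmapsI₁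
    (fun x hx y hy hxy =>
      f0_strictMono h00 h01 h10 h11 hdet hε0 hε (le_trans hp₁.le hx.1) hxy)
    (fun x hx y hy hxy =>
      f1_strictMono h00 h01 h10 h11 hdet hε0 hε (le_trans hp₁.le hx.1) hxy)
    (fun x hx y hy => f0_logcontract h00 h01 h10 h11 hdet hε0 hε
      (lt_of_lt_of_le hp₁ hx.1) (lt_of_lt_of_le hp₁ hy.1))
    (fun x hx y hy => f1_logcontract h00 h01 h10 h11 hdet hε0 hε
      (lt_of_lt_of_le hp₁ hx.1) (lt_of_lt_of_le hp₁ hy.1))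
    hγδ
    (fun x hx => f1_mono h00 h01 h10 h11 hdet hε0 hε (le_trans hp₁.le hx.1) hx.2)
    (fun x hx => f0_mono h00 h01 h10 h11 hdet hε0 hε hp₁.le hx.1)
  exact ⟨hSne, hScompact, hSsub, htd, hperf⟩
end

section
/- Continuity of Blackwell's measure (Theorem 3.4): Q has no point masses, i.e. Q({p}) = 0 for every p ∈ ℝ; equivalently, for every p ∈ supp(Q) and every η > 0 there is an open interval I_p containing p with Q(I_p) < η. -/
open MeasureTheory

set_option maxHeartbeats 2000000 in
/-- Theorem 3.4 (continuity of Blackwell's measure): `Q` has no point masses. -/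
theorem blackwell_measure_continuous (π00 π01 π10 π11 ε : ℝ)
    (h00 : 0 < π00) (h01 : 0 < π01) (h10 : 0 < π10) (h11 : 0 < π11)
    (hrow0 : π00 + π01 = 1) (hrow1 : π10 + π11 = 1)
    (hdet : 0 < π00 * π11 - π01 * π10)
    (hε0 : 0 < ε) (hε : ε < 1 / 2)
    (Q : MeasureTheory.Measure ℝ) [MeasureTheory.IsProbabilityMeasure Q]
    (hQpos : Q (Set.Ioi 0) = 1)
    (hQinv : BlackwellInvariant π00 π01 π10 π11 ε Q) :
    ∀ p : ℝ, Q {p} = 0 := by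
  classical
  have hε1 : (0:ℝ) < 1 - ε := by linarith
  have h2ε : (0:ℝ) < 1 - 2*ε := by linarith
  have hC : (0:ℝ) < (1 - ε) / ε := div_pos hε1 hε0
  have hc : (0:ℝ) < ε / (1 - ε) := div_pos hε0 hε1
  have hcC : ε / (1 - ε) < (1 - ε) / ε := by
    rw [div_lt_div_iff₀ hε1 hε0]; nlinarith
  have h0010 : π10 < π00 := by nlinarith
  have h001 : π00 < 1 := by linarith
  have h101 : π10 < 1 := by linarith
  -- facts about g(x) = (π00 x + π10)/(π01 x + π11)
  set g : ℝ → ℝ := fun x => (π00 * x + π10) / (π01 * x + π11) with hg_def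
  have hden : ∀ x : ℝ, 0 < x → 0 < π01 * x + π11 := fun x hx => by nlinarith
  have hgpos : ∀ x : ℝ, 0 < x → 0 < g x := fun x hx =>
    div_pos (by nlinarith) (hden x hx)
  have hgmono : ∀ x y : ℝ, 0 < x → x < y → g x < g y := by
    intro x y hx hxy
    have hy : (0:ℝ) < y := lt_trans hx hxy
    show (π00 * x + π10) / (π01 * x + π11) < (π00 * y + π10) / (π01 * y + π11)
    rw [div_lt_div_iff₀ (hden x hx) (hden y hy)]
    nlinarith [mul_pos (sub_pos.mpr hdet) (sub_pos.mpr hxy)]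
  have hginj : ∀ x y : ℝ, 0 < x → 0 < y → g x = g y → x = y := by
    intro x y hx hy hgxy
    rcases lt_trichotomy x y with h | h | h
    · exact absurd hgxy (ne_of_lt (hgmono x y hx h))
    · exact h
    · exact absurd hgxy.symm (ne_of_lt (hgmono y x hy h))
  have hf0 : ∀ x : ℝ, f₀ π00 π01 π10 π11 ε x = ((1 - ε) / ε) * g x := fun x => rfl
  have hf1 : ∀ x : ℝ, f₁ π00 π01 π10 π11 ε x = (ε / (1 - ε)) * g x := fun x => rfl
  -- facts about r₀, r₁
  have hπ011 : π01 < 1 := by linarith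
  have hπ111 : π11 < 1 := by linarith
  have hα0 : 0 < (1 - ε) * π00 + ε * π01 := by nlinarith [mul_pos hε1 h00, mul_pos hε0 h01]
  have hβ0 : 0 < (1 - ε) * π10 + ε * π11 := by nlinarith [mul_pos hε1 h10, mul_pos hε0 h11]
  have hγ0 : 0 < ε * π00 + (1 - ε) * π01 := by nlinarith [mul_pos hε0 h00, mul_pos hε1 h01]
  have hδ0 : 0 < ε * π10 + (1 - ε) * π11 := by nlinarith [mul_pos hε0 h10, mul_pos hε1 h11]
  have hα1 : (1 - ε) * π00 + ε * π01 < 1 := by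
    nlinarith [mul_pos hε1 (by linarith : (0:ℝ) < 1 - π00), mul_pos hε0 (by linarith : (0:ℝ) < 1 - π01)]
  have hβ1 : (1 - ε) * π10 + ε * π11 < 1 := by
    nlinarith [mul_pos hε1 (by linarith : (0:ℝ) < 1 - π10), mul_pos hε0 (by linarith : (0:ℝ) < 1 - π11)]
  have hγ1 : ε * π00 + (1 - ε) * π01 < 1 := by
    nlinarith [mul_pos hε0 (by linarith : (0:ℝ) < 1 - π00), mul_pos hε1 (by linarith : (0:ℝ) < 1 - π01)]
  have hδ1 : ε * π10 + (1 - ε) * π11 < 1 := by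
    nlinarith [mul_pos hε0 (by linarith : (0:ℝ) < 1 - π10), mul_pos hε1 (by linarith : (0:ℝ) < 1 - π11)]
  have hβα : (1 - ε) * π10 + ε * π11 < (1 - ε) * π00 + ε * π01 := by
    nlinarith [mul_pos h2ε (sub_pos.mpr h0010)]
  have hr0_nonneg : ∀ x : ℝ, 0 < x → 0 ≤ r₀ π00 π01 π10 π11 ε x := by
    intro x hx
    apply div_nonneg _ (by linarith)
    nlinarith [mul_pos hα0 hx]
  have hr1_nonneg : ∀ x : ℝ, 0 < x → 0 ≤ r₁ π00 π01 π10 π11 ε x := by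
    intro x hx
    apply div_nonneg _ (by linarith)
    nlinarith [mul_pos hγ0 hx]
  have hr0_lt_one : ∀ x : ℝ, 0 < x → r₀ π00 π01 π10 π11 ε x < 1 := by
    intro x hx
    rw [r₀, div_lt_one (by linarith : (0:ℝ) < x + 1)]
    nlinarith [mul_pos (by linarith : (0:ℝ) < 1 - ((1 - ε) * π00 + ε * π01)) hx]
  have hr1_lt_one : ∀ x : ℝ, 0 < x → r₁ π00 π01 π10 π11 ε x < 1 := by
    intro x hx
    rw [r₁, div_lt_one (by linarith : (0:ℝ) < x + 1)]
    nlinarith [mul_pos (by linarith : (0:ℝ) < 1 - (ε * π00 + (1 - ε) * π01)) hx]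
  have hrsum : ∀ x : ℝ, 0 < x →
      r₀ π00 π01 π10 π11 ε x + r₁ π00 π01 π10 π11 ε x = 1 := by
    intro x hx
    have hx1 : (x:ℝ) + 1 ≠ 0 := by linarith
    rw [r₀, r₁, ← add_div, div_eq_one_iff_eq hx1]
    linear_combination x * hrow0 + hrow1
  have hr0_mono : ∀ x y : ℝ, 0 < x → x < y → r₀ π00 π01 π10 π11 ε x < r₀ π00 π01 π10 π11 ε y := by
    intro x y hx hxy
    have hy : (0:ℝ) < y := lt_trans hx hxy
    rw [r₀, r₀, div_lt_div_iff₀ (by linarith) (by linarith)]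
    nlinarith [mul_pos (sub_pos.mpr hβα) (sub_pos.mpr hxy)]
  -- measure-theoretic preliminaries
  have hQc : Q (Set.Ioi (0:ℝ))ᶜ = 0 := by
    rw [measure_compl measurableSet_Ioi (measure_ne_top Q _), hQpos, measure_univ]
    simp
  have hae : ∀ᵐ x ∂Q, x ∈ Set.Ioi (0:ℝ) := by
    rw [MeasureTheory.ae_iff]
    convert hQc using 2; ext x; simp
  set m := ⨆ q : ℝ, Q {q} with hm_def
  have hle_m : ∀ q : ℝ, Q {q} ≤ m := fun q => le_iSup (fun q : ℝ => Q {q}) q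
  suffices hms : m = 0 by
    intro p
    exact le_antisymm (hms ▸ hle_m p) (zero_le)
  by_contra hm0
  have hm1 : m ≤ 1 := iSup_le fun q => prob_le_one
  have hmt : m ≠ ⊤ := (lt_of_le_of_lt hm1 ENNReal.one_lt_top).ne
  -- the set of "big atoms" is finite and nonempty, take a maximal atom p*
  have hhalf : m / 2 < m := ENNReal.half_lt_self hm0 hmt
  have hA : Set.Finite {q : ℝ | m / 2 ≤ Q {q}} := by
    apply Measure.finite_const_le_meas_of_disjoint_iUnion Q
      (ε := m / 2) (ENNReal.half_pos hm0) (As := fun q : ℝ => {q})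
      (fun q => measurableSet_singleton q)
    · intro i j hij
      simp [Function.onFun, Set.disjoint_singleton, hij]
    · exact measure_ne_top Q _
  have hAne : hA.toFinset.Nonempty := by
    obtain ⟨q, hq⟩ := lt_iSup_iff.mp hhalf
    exact ⟨q, by simp [Set.Finite.mem_toFinset]; exact hq.le⟩
  obtain ⟨p, hpA, hpmax⟩ := hA.toFinset.exists_max_image (fun q => Q {q}) hAne
  have hpA' : m / 2 ≤ Q {p} := by simpa [Set.Finite.mem_toFinset] using hpA
  have hpm : Q {p} = m := by
    refine le_antisymm (hle_m p) (iSup_le fun q => ?_)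
    by_cases hq : m / 2 ≤ Q {q}
    · exact hpmax q (by simpa [Set.Finite.mem_toFinset] using hq)
    · exact (not_le.mp hq).le.trans hpA'
  have hp0 : (0:ℝ) < p := by
    by_contra hp0
    apply hm0
    rw [← hpm]
    refine measure_mono_null ?_ hQc
    intro x hx
    simp only [Set.mem_singleton_iff] at hx
    simp [hx, Set.mem_Ioi]
    linarith [not_lt.mp hp0]
  -- apply the invariance equation to E = {p}
  have hinv := hQinv {p} (measurableSet_singleton p) (Set.singleton_subset_iff.mpr hp0)
  -- each term of the invariance equation is bounded by ofReal (r_b x_b) * m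
  -- where x_b is the unique positive preimage (if it exists)
  set S₀ : Set ℝ := f₀ π00 π01 π10 π11 ε ⁻¹' {p} ∩ Set.Ioi 0 with hS0_def
  set S₁ : Set ℝ := f₁ π00 π01 π10 π11 ε ⁻¹' {p} ∩ Set.Ioi 0 with hS1_def
  have hcongr : ∀ (s : Set ℝ) (h : ℝ → ENNReal),
      (∫⁻ x in s, h x ∂Q) = ∫⁻ x in s ∩ Set.Ioi 0, h x ∂Q := by
    intro s h
    refine setLIntegral_congr ?_
    filter_upwards [hae] with x hx
    exact eq_iff_iff.mpr ⟨fun h' => ⟨h', hx⟩, fun h' => h'.1⟩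
  have hbound : ∀ (s : Set ℝ) (h : ℝ → ENNReal) (x₀ : ℝ), s ⊆ {x₀} →
      (∫⁻ x in s, h x ∂Q) ≤ h x₀ * m := by
    intro s h x₀ hsub
    calc (∫⁻ x in s, h x ∂Q) ≤ ∫⁻ x in {x₀}, h x ∂Q := lintegral_mono_set hsub
      _ = h x₀ * Q {x₀} := lintegral_singleton h x₀
      _ ≤ h x₀ * m := mul_le_mul_right (hle_m x₀) _
  -- final arithmetic contradiction template
  have final : ∀ c : ℝ, c < 1 → m ≤ ENNReal.ofReal c * m → False := by
    intro c hc1 hcm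
    have : ENNReal.ofReal c * m < 1 * m := by
      rw [mul_comm _ m, mul_comm 1 m]; apply ENNReal.mul_lt_mul_right hm0 hmt
      exact lt_of_lt_of_le (ENNReal.ofReal_lt_one.mpr hc1) le_rfl
    rw [one_mul] at this
    exact absurd (lt_of_le_of_lt hcm this) (lt_irrefl m)
  -- subsingleton structure of S₀ and S₁
  have hS0sub : ∀ x₀ ∈ S₀, S₀ ⊆ {x₀} := by
    intro x₀ hx₀ y hy
    obtain ⟨hy1, hy2⟩ := hy
    obtain ⟨hx1, hx2⟩ := hx₀
    simp only [Set.mem_preimage, Set.mem_singleton_iff] at hy1 hx1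
    have : g y = g x₀ := by
      have := hy1.trans hx1.symm
      rw [hf0, hf0] at this
      exact mul_left_cancel₀ hC.ne' this
    simp [hginj y x₀ hy2 hx2 this]
  have hS1sub : ∀ x₁ ∈ S₁, S₁ ⊆ {x₁} := by
    intro x₁ hx₁ y hy
    obtain ⟨hy1, hy2⟩ := hy
    obtain ⟨hx1, hx2⟩ := hx₁
    simp only [Set.mem_preimage, Set.mem_singleton_iff] at hy1 hx1
    have : g y = g x₁ := by
      have := hy1.trans hx1.symm
      rw [hf1, hf1] at this
      exact mul_left_cancel₀ hc.ne' this
    simp [hginj y x₁ hy2 hx2 this]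
  rw [hpm] at hinv
  rw [hcongr (f₀ π00 π01 π10 π11 ε ⁻¹' {p}), hcongr (f₁ π00 π01 π10 π11 ε ⁻¹' {p})] at hinv
  rw [← hS0_def, ← hS1_def] at hinv
  rcases Set.eq_empty_or_nonempty S₀ with h0 | ⟨x₀, hx₀⟩ <;>
    rcases Set.eq_empty_or_nonempty S₁ with h1 | ⟨x₁, hx₁⟩
  · -- both preimages empty : m = 0
    rw [h0, h1] at hinv
    simp at hinv
    exact hm0 hinv
  · -- only f₁-preimage
    rw [h0] at hinv
    simp only [Measure.restrict_empty, lintegral_zero_measure, zero_add] at hinv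
    have hx1pos : (0:ℝ) < x₁ := hx₁.2
    refine final (r₁ π00 π01 π10 π11 ε x₁) (hr1_lt_one x₁ hx1pos) ?_
    exact hinv.le.trans (hbound S₁ _ x₁ (hS1sub x₁ hx₁))
  · -- only f₀-preimage
    rw [h1] at hinv
    simp only [Measure.restrict_empty, lintegral_zero_measure, add_zero] at hinv
    have hx0pos : (0:ℝ) < x₀ := hx₀.2
    refine final (r₀ π00 π01 π10 π11 ε x₀) (hr0_lt_one x₀ hx0pos) ?_
    exact hinv.le.trans (hbound S₀ _ x₀ (hS0sub x₀ hx₀))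
  · -- both preimages exist: x₀ < x₁ and r₀ x₀ + r₁ x₁ < 1
    have hx0pos : (0:ℝ) < x₀ := hx₀.2
    have hx1pos : (0:ℝ) < x₁ := hx₁.2
    have hfx0 : f₀ π00 π01 π10 π11 ε x₀ = p := hx₀.1
    have hfx1 : f₁ π00 π01 π10 π11 ε x₁ = p := hx₁.1
    have hgglt : g x₀ < g x₁ := by
      have heq : ((1 - ε) / ε) * g x₀ = (ε / (1 - ε)) * g x₁ := by
        rw [← hf0, ← hf1, hfx0, hfx1]
      nlinarith [hgpos x₀ hx0pos, hgpos x₁ hx1pos]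
    have hx01 : x₀ < x₁ := by
      by_contra h
      rcases eq_or_lt_of_le (not_lt.mp h) with h' | h'
      · exact absurd (h' ▸ hgglt) (lt_irrefl _)
      · exact absurd (hgmono x₁ x₀ hx1pos h') (not_lt.mpr hgglt.le)
    have hrlt : r₀ π00 π01 π10 π11 ε x₀ + r₁ π00 π01 π10 π11 ε x₁ < 1 := by
      have h1 := hrsum x₁ hx1pos
      have h2 := hr0_mono x₀ x₁ hx0pos hx01
      linarith
    refine final (r₀ π00 π01 π10 π11 ε x₀ + r₁ π00 π01 π10 π11 ε x₁) hrlt ?_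
    calc m ≤ ENNReal.ofReal (r₀ π00 π01 π10 π11 ε x₀) * m
            + ENNReal.ofReal (r₁ π00 π01 π10 π11 ε x₁) * m :=
          hinv.le.trans (add_le_add (hbound S₀ _ x₀ (hS0sub x₀ hx₀)) (hbound S₁ _ x₁ (hS1sub x₁ hx₁)))
      _ = ENNReal.ofReal (r₀ π00 π01 π10 π11 ε x₀ + r₁ π00 π01 π10 π11 ε x₁) * m := by
          rw [ENNReal.ofReal_add (hr0_nonneg x₀ hx0pos) (hr1_nonneg x₁ hx1pos), add_mul]
end
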